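/- Let R be a generalised ray and let n ≥ 1. Then the inclusion of the subspace (D_R^n)' = {(x,t) ∈ (R∨R)^n × R : t ≥ 1} into the coarse disk D_R^n = (R∨R)^n × R is a coarse equivalence; in particular the coarse spaces D_R^n and (D_R^n)' are coarsely equivalent. -/

import Mathlib

open scoped NNReal

namespace CoarsePaper

variable {X Y : Type*}

/-- Composition `M N = {(x,z) | ∃ y, (x,y) ∈ M ∧ (y,z) ∈ N}` of subsets of `X × X`. -/
def Comp (M N : Set (X × X)) : Set (X × X) :=
  {p | ∃ y, (p.1, y) ∈ M ∧ (y, p.2) ∈ N}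

/-- A collection `c` of subsets of `X × X` (the *controlled sets*) is a coarse structure
if it contains the diagonal and is closed under subsets, finite unions, reflection in the
diagonal, and composition. -/
structure IsCoarseStructure (c : Set (Set (X × X))) : Prop where
  diag_mem : Set.diagonal X ∈ c
  subset_mem : ∀ ⦃M N : Set (X × X)⦄, M ∈ c → N ⊆ M → N ∈ c
  union_mem : ∀ ⦃M N : Set (X × X)⦄, M ∈ c → N ∈ c → M ∪ N ∈ c
  swap_mem : ∀ ⦃M : Set (X × X)⦄, M ∈ c → Prod.swap '' M ∈ c
  comp_mem : ∀ ⦃M N : Set (X × X)⦄, M ∈ c → N ∈ c → Comp M N ∈ c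

/-- A set `B ⊆ X` is bounded if `B = M_x = {y | (x,y) ∈ M}` for some controlled `M` and
some point `x`. -/
def IsBounded (c : Set (Set (X × X))) (B : Set X) : Prop :=
  ∃ M ∈ c, ∃ x : X, B = {y | (x, y) ∈ M}

/-- Two maps `f g : S → X` into a coarse space are close if `{(f s, g s) | s ∈ S}` is
controlled. -/
def Close {S : Type*} (c : Set (Set (X × X))) (f g : S → X) : Prop :=
  {p : X × X | ∃ s, p = (f s, g s)} ∈ c

/-- A map between coarse spaces is a coarse map if images of controlled sets are controlled
and preimages of bounded sets are bounded. -/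
def IsCoarseMap (cX : Set (Set (X × X))) (cY : Set (Set (Y × Y))) (f : X → Y) : Prop :=
  (∀ M ∈ cX, (fun p : X × X => (f p.1, f p.2)) '' M ∈ cY) ∧
    ∀ B : Set Y, IsBounded cY B → IsBounded cX (f ⁻¹' B)

/-- A coarse structure on a topological space is compatible with the topology if every
controlled set is contained in an open controlled set and the closure of every bounded set
is compact. -/
def Compatible [TopologicalSpace X] (c : Set (Set (X × X))) : Prop :=
  (∀ M ∈ c, ∃ U ∈ c, IsOpen U ∧ M ⊆ U) ∧
    ∀ B : Set X, IsBounded c B → IsCompact (closure B)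

/-- The coarse structure on the space `[0,∞) = ℝ≥0` making it a generalised ray:
a coarse structure compatible with the topology, closed under sums `M + N`, under the
squeezing operation `Mˢ`, and under translations `a + M`. -/
structure IsGeneralisedRay (c : Set (Set (ℝ≥0 × ℝ≥0))) : Prop where
  coarse : IsCoarseStructure c
  compatible : Compatible c
  sum_mem : ∀ ⦃M N : Set (ℝ≥0 × ℝ≥0)⦄, M ∈ c → N ∈ c →
    {p : ℝ≥0 × ℝ≥0 | ∃ u v x y, (u, v) ∈ M ∧ (x, y) ∈ N ∧ p = (u + x, v + y)} ∈ c
  squeeze_mem : ∀ ⦃M : Set (ℝ≥0 × ℝ≥0)⦄, M ∈ c →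
    {p : ℝ≥0 × ℝ≥0 | ∃ x y, (x, y) ∈ M ∧ x ≤ p.1 ∧ p.1 ≤ y ∧ x ≤ p.2 ∧ p.2 ≤ y} ∈ c
  translate_mem : ∀ (a : ℝ≥0) ⦃M : Set (ℝ≥0 × ℝ≥0)⦄, M ∈ c →
    {p : ℝ≥0 × ℝ≥0 | ∃ x y, (x, y) ∈ M ∧ p = (a + x, a + y)} ∈ c

/-- The bounded coarse structure of a (pseudo)metric space: a set is controlled iff it is
contained in some neighbourhood of the diagonal `{(x,y) | dist x y < r}`, `r > 0`. -/
def metricC (X : Type*) [PseudoMetricSpace X] : Set (Set (X × X)) :=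
  {M | ∃ r : ℝ, 0 < r ∧ M ⊆ {p : X × X | dist p.1 p.2 < r}}

/-- The product coarse structure on `X × Y`: a set is controlled iff it is contained in
`{((u,v),(x,y)) | (u,x) ∈ M₁, (v,y) ∈ M₂}` for controlled `M₁ ⊆ X × X`, `M₂ ⊆ Y × Y`. -/
def prodC (cX : Set (Set (X × X))) (cY : Set (Set (Y × Y))) :
    Set (Set ((X × Y) × (X × Y))) :=
  {M | ∃ M₁ ∈ cX, ∃ M₂ ∈ cY,
    M ⊆ {p : (X × Y) × (X × Y) | (p.1.1, p.2.1) ∈ M₁ ∧ (p.1.2, p.2.2) ∈ M₂}}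

/-- The product coarse structure on a (finite) product `∀ i, Z i`: a set is controlled iff
it is contained in `{(f,g) | ∀ i, (f i, g i) ∈ M i}` for a family of controlled sets. -/
def piC {ι : Type*} {Z : ι → Type*} (c : ∀ i, Set (Set (Z i × Z i))) :
    Set (Set ((∀ i, Z i) × (∀ i, Z i))) :=
  {M | ∃ Mi : ∀ i, Set (Z i × Z i), (∀ i, Mi i ∈ c i) ∧
    M ⊆ {p : (∀ i, Z i) × (∀ i, Z i) | ∀ i, (p.1 i, p.2 i) ∈ Mi i}}

/-- The subspace coarse structure on `A ⊆ X`: the controlled sets are (identified with)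
the controlled sets of `X` contained in `A × A`. -/
def subC (cX : Set (Set (X × X))) (A : Set X) : Set (Set (↥A × ↥A)) :=
  {M : Set (↥A × ↥A) | (fun p : ↥A × ↥A => ((p.1 : X), (p.2 : X))) '' M ∈ cX}

/-- `B` is a finite union of bounded subsets. -/
def IsFinUnionBounded (c : Set (Set (X × X))) (B : Set X) : Prop :=
  ∃ (n : ℕ) (f : Fin n → Set X), (∀ i, IsBounded c (f i)) ∧ B = ⋃ i, f i

/-- The coarse disjoint union structure on `X ⊕ Y`: a set is controlled iff it is contained
in `M_X ∪ M_Y ∪ (D × D)` where `M_X`, `M_Y` are controlled and `D` is a finite union of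
bounded subsets of `X` and of `Y`. -/
def sumC (cX : Set (Set (X × X))) (cY : Set (Set (Y × Y))) :
    Set (Set ((X ⊕ Y) × (X ⊕ Y))) :=
  {M | ∃ MX ∈ cX, ∃ MY ∈ cY, ∃ BX : Set X, ∃ BY : Set Y,
    IsFinUnionBounded cX BX ∧ IsFinUnionBounded cY BY ∧
      M ⊆ (fun p : X × X => ((Sum.inl p.1 : X ⊕ Y), Sum.inl p.2)) '' MX ∪
          (fun p : Y × Y => ((Sum.inr p.1 : X ⊕ Y), Sum.inr p.2)) '' MY ∪
          (Sum.inl '' BX ∪ Sum.inr '' BY) ×ˢ (Sum.inl '' BX ∪ Sum.inr '' BY)}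

/-- A coarse map `f` is a coarse equivalence if there is a coarse map `g` in the opposite
direction with `g ∘ f` and `f ∘ g` close to the respective identity maps. -/
def IsCoarseEquiv (cX : Set (Set (X × X))) (cY : Set (Set (Y × Y))) (f : X → Y) : Prop :=
  IsCoarseMap cX cY f ∧
    ∃ g : Y → X, IsCoarseMap cY cX g ∧
      Close cX (g ∘ f) (id : X → X) ∧ Close cY (f ∘ g) (id : Y → Y)

/-- Two coarse spaces are coarsely equivalent if there is a coarse equivalence between
them. -/
def CoarselyEquivalent (cX : Set (Set (X × X))) (cY : Set (Set (Y × Y))) : Prop :=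
  ∃ f : X → Y, IsCoarseEquiv cX cY f

/-- `m[S] = {y | (x,y) ∈ m for some x ∈ S}`. -/
def img (m : Set (X × X)) (S : Set X) : Set X := {y | ∃ x ∈ S, (x, y) ∈ m}

/-- A decomposition `X = A ∪ B` is coarsely excisive if for every controlled `m` there is
a controlled `M` with `m[A] ∩ m[B] ⊆ M[A ∩ B]`. -/
def IsCoarselyExcisive (c : Set (Set (X × X))) (A B : Set X) : Prop :=
  A ∪ B = Set.univ ∧ ∀ m ∈ c, ∃ M ∈ c, img m A ∩ img m B ⊆ img M (A ∩ B)

/-- The underlying set `(R ∨ R)ⁿ × R` of the coarse `n`-disk. -/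
abbrev DiskT (n : ℕ) : Type := (Fin n → ℝ≥0 ⊕ ℝ≥0) × ℝ≥0

/-- The coarse structure of the coarse `n`-disk `D_R^n = (R ∨ R)ⁿ × R`. -/
def diskC (c : Set (Set (ℝ≥0 × ℝ≥0))) (n : ℕ) : Set (Set (DiskT n × DiskT n)) :=
  prodC (piC fun _ : Fin n => sumC c c) c

/-- The coarse `(n-1)`-sphere `S_R^{n-1} = (R ∨ R)ⁿ × {0}` as a subset of the `n`-disk. -/
def sphereSet (n : ℕ) : Set (DiskT n) := {q | q.2 = 0}

/-- The coarse structure of the coarse `(n-1)`-sphere `S_R^{n-1}`. -/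
def sphereC (c : Set (Set (ℝ≥0 × ℝ≥0))) (n : ℕ) :
    Set (Set (↥(sphereSet n) × ↥(sphereSet n))) :=
  subC (diskC c n) (sphereSet n)

section Helpers

variable {c : Set (Set (ℝ≥0 × ℝ≥0))}

/-- In a subset-closed collection, subsets of bounded sets are bounded. -/
lemma isBounded_mono {Z : Type*} {cz : Set (Set (Z × Z))}
    (hsub : ∀ ⦃M N : Set (Z × Z)⦄, M ∈ cz → N ⊆ M → N ∈ cz)
    {B S : Set Z} (hB : IsBounded cz B) (h : S ⊆ B) : IsBounded cz S := by
  obtain ⟨M, hM, x, rfl⟩ := hB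
  refine ⟨{p | p.1 = x ∧ p.2 ∈ S}, hsub hM ?_, x, ?_⟩
  · rintro ⟨a, b⟩ ⟨rfl, hb⟩; exact h hb
  · ext y; simp [Set.mem_setOf_eq]

lemma diskC_subset_closed {n : ℕ} : ∀ ⦃M N : Set (DiskT n × DiskT n)⦄,
    M ∈ diskC c n → N ⊆ M → N ∈ diskC c n := by
  rintro M N ⟨M₁, h₁, M₂, h₂, hsub⟩ hNM
  exact ⟨M₁, h₁, M₂, h₂, hNM.trans hsub⟩

/-- Key lemma: `(0, b)` lies in some controlled set, for every `b`. -/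
lemma exists_controlled_zero (hc : IsGeneralisedRay c) (b : ℝ≥0) :
    ∃ N ∈ c, ((0 : ℝ≥0), b) ∈ N := by
  obtain ⟨U, hU, hUopen, hdiag⟩ := hc.compatible.1 _ hc.coarse.diag_mem
  set S : Set ℝ≥0 := {b | ∃ N ∈ c, ((0 : ℝ≥0), b) ∈ N} with hS
  have h0 : (0 : ℝ≥0) ∈ S := ⟨_, hc.coarse.diag_mem, rfl⟩
  have hdc : ∀ {x y : ℝ≥0}, x ≤ y → y ∈ S → x ∈ S := by
    rintro x y hxy ⟨N, hN, hmem⟩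
    refine ⟨_, hc.squeeze_mem hN, 0, y, hmem, le_rfl, zero_le, zero_le, hxy⟩
  have hstep : ∀ {x y : ℝ≥0}, x ∈ S → (x, y) ∈ U → y ∈ S := by
    rintro x y ⟨N, hN, hmem⟩ hxy
    exact ⟨_, hc.coarse.comp_mem hN hU, x, hmem, hxy⟩
  show b ∈ S
  by_contra hb
  set T : Set ℝ≥0 := Sᶜ with hT
  have hTne : T.Nonempty := ⟨b, hb⟩
  set β : ℝ≥0 := sInf T with hβ
  have hIio : ∀ {x : ℝ≥0}, x < β → x ∈ S := by
    intro x hx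
    by_contra hxS
    exact absurd (csInf_le (OrderBot.bddBelow T) hxS) (not_le.2 hx)
  have hββ : ((β, β) : ℝ≥0 × ℝ≥0) ∈ U := hdiag rfl
  obtain ⟨ε, hε, hball⟩ := Metric.isOpen_iff.1 hUopen _ hββ
  set η : ℝ≥0 := Real.toNNReal (ε / 2) with hη
  have hηpos : 0 < η := Real.toNNReal_pos.2 (by linarith)
  have hηε : (η : ℝ) < ε := by
    rw [hη, Real.coe_toNNReal _ (by linarith)]; linarith
  have hxU : ((β - η, β) : ℝ≥0 × ℝ≥0) ∈ U := by
    apply hball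
    rw [Metric.mem_ball, Prod.dist_eq]
    simp only [dist_self]
    have h1 : β - η ≤ β := tsub_le_self
    have h2 : β - (β - η) ≤ η := tsub_le_iff_left.2 le_tsub_add
    calc max (dist (β - η) β) 0 = dist (β - η) β := max_eq_left dist_nonneg
      _ = (β : ℝ) - (β - η : ℝ≥0) := by
          rw [NNReal.dist_eq, abs_sub_comm, abs_of_nonneg (by
            simpa using (NNReal.coe_le_coe.2 h1))]
      _ ≤ (η : ℝ) := by
          have := NNReal.coe_le_coe.2 h2
          rw [NNReal.coe_sub h1] at this; linarith
      _ < ε := hηε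
  have hxS : β - η ∈ S := by
    rcases eq_or_lt_of_le (show (0:ℝ≥0) ≤ β from zero_le) with h | h
    · simp only [← h, zero_tsub]; exact h0
    · exact hIio (tsub_lt_self h hηpos)
  have hβS : β ∈ S := hstep hxS hxU
  have hβηS : β + η ∈ S := by
    refine hstep hβS (hball ?_)
    rw [Metric.mem_ball, Prod.dist_eq]
    simp only [dist_self]
    have : dist β (β + η) = (η : ℝ) := by
      rw [NNReal.dist_eq]; push_cast; rw [abs_sub_comm]; simp [abs_of_nonneg]
    rw [max_eq_right dist_nonneg, dist_comm, this]; exact hηε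
  have : β + η ≤ β := by
    rw [hβ]
    refine le_csInf hTne fun t ht => ?_
    by_contra hlt
    exact ht (hdc (le_of_not_ge hlt) hβηS)
  exact absurd this (by simpa using hηpos.ne')

lemma exists_controlled_pair (hc : IsGeneralisedRay c) (s t : ℝ≥0) :
    ∃ N ∈ c, (s, t) ∈ N := by
  obtain ⟨N, hN, hmem⟩ := exists_controlled_zero hc (max s t)
  exact ⟨_, hc.squeeze_mem hN, 0, max s t, hmem, zero_le, le_max_left _ _,
    zero_le, le_max_right _ _⟩

/-- The "shift by one" controlled set: contains `(t, t+1)` for all `t`. -/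
lemma exists_shift (hc : IsGeneralisedRay c) :
    ∃ V ∈ c, ∀ t : ℝ≥0, (t, t + 1) ∈ V := by
  obtain ⟨N, hN, hmem⟩ := exists_controlled_zero hc 1
  refine ⟨_, hc.sum_mem hc.coarse.diag_mem hN, fun t => ?_⟩
  exact ⟨t, t, 0, 1, rfl, hmem, by simp⟩

lemma bounded_empty (hc : IsGeneralisedRay c) : IsBounded c (∅ : Set ℝ≥0) :=
  ⟨∅, hc.coarse.subset_mem hc.coarse.diag_mem (Set.empty_subset _), 0, by simp⟩

lemma bounded_singleton (hc : IsGeneralisedRay c) (x : ℝ≥0) : IsBounded c {x} :=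
  ⟨Set.diagonal ℝ≥0, hc.coarse.diag_mem, x, by ext y; simp [Set.diagonal, eq_comm]⟩

lemma bounded_union (hc : IsGeneralisedRay c) {B₁ B₂ : Set ℝ≥0}
    (h₁ : IsBounded c B₁) (h₂ : IsBounded c B₂) : IsBounded c (B₁ ∪ B₂) := by
  obtain ⟨M, hM, x, rfl⟩ := h₁
  obtain ⟨N, hN, y, rfl⟩ := h₂
  obtain ⟨P, hP, hPmem⟩ := exists_controlled_pair hc x y
  have hP' : ({(x, y)} : Set (ℝ≥0 × ℝ≥0)) ∈ c :=
    hc.coarse.subset_mem hP (by simpa using hPmem)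
  refine ⟨M ∪ Comp {(x, y)} N,
    hc.coarse.union_mem hM (hc.coarse.comp_mem hP' hN), x, ?_⟩
  ext z
  constructor
  · rintro (hz | hz)
    · exact Or.inl hz
    · exact Or.inr ⟨y, rfl, hz⟩
  · rintro (hz | ⟨w, hw, hz⟩)
    · exact Or.inl hz
    · have hwy : w = y := congrArg Prod.snd (Set.mem_singleton_iff.1 hw)
      subst hwy
      exact Or.inr hz

lemma isBounded_iUnion_fin (hc : IsGeneralisedRay c) :
    ∀ (n : ℕ) (f : Fin n → Set ℝ≥0), (∀ i, IsBounded c (f i)) →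
      IsBounded c (⋃ i, f i) := by
  intro n
  induction n with
  | zero => intro f _; simpa using bounded_empty hc
  | succ m ih =>
    intro f hf
    have : (⋃ i, f i) = f 0 ∪ ⋃ i : Fin m, f i.succ := by
      ext x; simp [Fin.exists_fin_succ]
    rw [this]
    exact bounded_union hc (hf 0) (ih _ fun i => hf i.succ)

lemma bounded_of_finUnion (hc : IsGeneralisedRay c) {B : Set ℝ≥0}
    (h : IsFinUnionBounded c B) : IsBounded c B := by
  obtain ⟨m, f, hf, rfl⟩ := h
  exact isBounded_iUnion_fin hc m f hf

lemma finUnion_of_bounded (hc : IsGeneralisedRay c) {B : Set ℝ≥0}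
    (h : IsBounded c B) : IsFinUnionBounded c B :=
  ⟨1, fun _ => B, fun _ => h, (Set.iUnion_const B).symm⟩

lemma finUnion_empty (hc : IsGeneralisedRay c) :
    IsFinUnionBounded c (∅ : Set ℝ≥0) :=
  finUnion_of_bounded hc (bounded_empty hc)

lemma diagonal_mem_sumC (hc : IsGeneralisedRay c) :
    Set.diagonal (ℝ≥0 ⊕ ℝ≥0) ∈ sumC c c := by
  refine ⟨Set.diagonal ℝ≥0, hc.coarse.diag_mem, Set.diagonal ℝ≥0, hc.coarse.diag_mem,
    ∅, ∅, finUnion_empty hc, finUnion_empty hc, ?_⟩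
  rintro ⟨w, w'⟩ (h : w = w')
  subst h
  cases w with
  | inl a => exact Or.inl (Or.inl ⟨(a, a), rfl, rfl⟩)
  | inr a => exact Or.inl (Or.inr ⟨(a, a), rfl, rfl⟩)

lemma sumC_slice (hc : IsGeneralisedRay c) {M : Set ((ℝ≥0 ⊕ ℝ≥0) × (ℝ≥0 ⊕ ℝ≥0))}
    (hM : M ∈ sumC c c) (w : ℝ≥0 ⊕ ℝ≥0) :
    ∃ BX BY : Set ℝ≥0, IsBounded c BX ∧ IsBounded c BY ∧
      ∀ z, (w, z) ∈ M → z ∈ Sum.inl '' BX ∪ Sum.inr '' BY := by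
  obtain ⟨MX, hMX, MY, hMY, BX₀, BY₀, hBX₀, hBY₀, hsub⟩ := hM
  have hbX₀ := bounded_of_finUnion hc hBX₀
  have hbY₀ := bounded_of_finUnion hc hBY₀
  cases w with
  | inl x =>
    refine ⟨{z | (x, z) ∈ MX} ∪ BX₀, BY₀,
      bounded_union hc ⟨MX, hMX, x, rfl⟩ hbX₀, hbY₀, fun z hz => ?_⟩
    rcases hsub hz with (⟨⟨a, b⟩, hab, heq⟩ | ⟨⟨a, b⟩, hab, heq⟩) | ⟨h1, h2⟩
    · rw [Prod.ext_iff] at heq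
      obtain ⟨he1, he2⟩ := heq
      have ha : a = x := Sum.inl.inj he1
      subst ha
      exact Or.inl ⟨b, Or.inl hab, he2⟩
    · rw [Prod.ext_iff] at heq
      exact absurd heq.1 (by simp)
    · rcases h2 with ⟨b, hb, rfl⟩ | ⟨b, hb, rfl⟩
      · exact Or.inl ⟨b, Or.inr hb, rfl⟩
      · exact Or.inr ⟨b, hb, rfl⟩
  | inr y =>
    refine ⟨BX₀, {z | (y, z) ∈ MY} ∪ BY₀, hbX₀,
      bounded_union hc ⟨MY, hMY, y, rfl⟩ hbY₀, fun z hz => ?_⟩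
    rcases hsub hz with (⟨⟨a, b⟩, hab, heq⟩ | ⟨⟨a, b⟩, hab, heq⟩) | ⟨h1, h2⟩
    · rw [Prod.ext_iff] at heq
      exact absurd heq.1 (by simp)
    · rw [Prod.ext_iff] at heq
      obtain ⟨he1, he2⟩ := heq
      have ha : a = y := Sum.inr.inj he1
      subst ha
      exact Or.inr ⟨b, Or.inl hab, he2⟩
    · rcases h2 with ⟨b, hb, rfl⟩ | ⟨b, hb, rfl⟩
      · exact Or.inl ⟨b, hb, rfl⟩
      · exact Or.inr ⟨b, Or.inr hb, rfl⟩

lemma sumC_point (hc : IsGeneralisedRay c) {M : Set ((ℝ≥0 ⊕ ℝ≥0) × (ℝ≥0 ⊕ ℝ≥0))}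
    (hM : M ∈ sumC c c) (w : ℝ≥0 ⊕ ℝ≥0) :
    ∃ Q ∈ sumC c c, ∀ z, (w, z) ∈ M → ((Sum.inl 0 : ℝ≥0 ⊕ ℝ≥0), z) ∈ Q := by
  obtain ⟨BX, BY, hBX, hBY, hslice⟩ := sumC_slice hc hM w
  refine ⟨(Sum.inl '' ({0} ∪ BX) ∪ Sum.inr '' BY) ×ˢ
      (Sum.inl '' ({0} ∪ BX) ∪ Sum.inr '' BY),
    ⟨∅, hc.coarse.subset_mem hc.coarse.diag_mem (Set.empty_subset _),
     ∅, hc.coarse.subset_mem hc.coarse.diag_mem (Set.empty_subset _),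
     {0} ∪ BX, BY,
     finUnion_of_bounded hc (bounded_union hc (bounded_singleton hc 0) hBX),
     finUnion_of_bounded hc hBY, fun p hp => Or.inr hp⟩, fun z hz => ?_⟩
  refine ⟨Or.inl ⟨0, Or.inl rfl, rfl⟩, ?_⟩
  rcases hslice z hz with ⟨b, hb, rfl⟩ | ⟨b, hb, rfl⟩
  · exact Or.inl ⟨b, Or.inr hb, rfl⟩
  · exact Or.inr ⟨b, hb, rfl⟩

lemma piC_point (hc : IsGeneralisedRay c) {n : ℕ}
    {M₁ : Set ((Fin n → ℝ≥0 ⊕ ℝ≥0) × (Fin n → ℝ≥0 ⊕ ℝ≥0))}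
    (hM₁ : M₁ ∈ piC fun _ : Fin n => sumC c c) (x₀ : Fin n → ℝ≥0 ⊕ ℝ≥0) :
    ∃ P ∈ piC (fun _ : Fin n => sumC c c), ∀ z, (x₀, z) ∈ M₁ →
      ((fun _ => Sum.inl 0 : Fin n → ℝ≥0 ⊕ ℝ≥0), z) ∈ P := by
  classical
  obtain ⟨Mi, hMi, hsub⟩ := hM₁
  choose Q hQmem hQ using fun i => sumC_point hc (hMi i) (x₀ i)
  refine ⟨{p | ∀ i, (p.1 i, p.2 i) ∈ Q i}, ⟨Q, hQmem, subset_rfl⟩, fun z hz i => ?_⟩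
  exact hQ i (z i) (hsub hz i)

end Helpers

/-- For a generalised ray `R` and `n ≥ 1`, the inclusion of
`(D_R^n)' = {(x,t) ∈ (R ∨ R)ⁿ × R | t ≥ 1}` into the coarse disk `D_R^n = (R ∨ R)ⁿ × R`
is a coarse equivalence; in particular `D_R^n` and `(D_R^n)'` are coarsely equivalent. -/
theorem disk_inclusion_coarse_equiv
    (c : Set (Set (ℝ≥0 × ℝ≥0))) (hc : IsGeneralisedRay c) (n : ℕ) (hn : 1 ≤ n) :
    IsCoarseEquiv (subC (diskC c n) {q : DiskT n | 1 ≤ q.2}) (diskC c n)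
        (fun q : ↥{q : DiskT n | 1 ≤ q.2} => (q : DiskT n)) ∧
      CoarselyEquivalent (subC (diskC c n) {q : DiskT n | 1 ≤ q.2}) (diskC c n) := by
  classical
  set A : Set (DiskT n) := {q : DiskT n | 1 ≤ q.2} with hA
  obtain ⟨V, hV, hVmem⟩ := exists_shift hc
  set W : Set (ℝ≥0 × ℝ≥0) := Prod.swap '' V with hWdef
  have hW : W ∈ c := hc.coarse.swap_mem hV
  have hWmem : ∀ t : ℝ≥0, (t + 1, t) ∈ W := fun t => ⟨(t, t + 1), hVmem t, rfl⟩
  have hdiagPi : {p : (Fin n → ℝ≥0 ⊕ ℝ≥0) × (Fin n → ℝ≥0 ⊕ ℝ≥0) | p.1 = p.2}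
      ∈ piC (fun _ : Fin n => sumC c c) := by
    refine ⟨fun _ => Set.diagonal _, fun _ => diagonal_mem_sumC hc, ?_⟩
    rintro ⟨u, v⟩ (h : u = v) i
    exact congrFun h i
  have hshiftD : {p : DiskT n × DiskT n | p.1.1 = p.2.1 ∧ (p.1.2, p.2.2) ∈ W}
      ∈ diskC c n := ⟨_, hdiagPi, W, hW, fun p hp => hp⟩
  set g : DiskT n → ↥A := fun q => ⟨(q.1, q.2 + 1), show (1:ℝ≥0) ≤ q.2 + 1 from le_add_self⟩ with hg
  have main : IsCoarseEquiv (subC (diskC c n) A) (diskC c n)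
      (fun q : ↥A => (q : DiskT n)) := by
    refine ⟨⟨fun M hM => hM, ?_⟩, g, ⟨?_, ?_⟩, ?_, ?_⟩
    · -- preimages of bounded sets under the inclusion are bounded
      rintro B ⟨K, hK, q, rfl⟩
      obtain ⟨M₁, hM₁, M₂, hM₂, hKsub⟩ := hK
      obtain ⟨P, hP, hPmem⟩ := piC_point hc hM₁ q.1
      obtain ⟨N0, hN0, hN0mem⟩ := exists_controlled_pair hc 1 q.2
      have hsingle : ({((1 : ℝ≥0), q.2)} : Set (ℝ≥0 × ℝ≥0)) ∈ c :=
        hc.coarse.subset_mem hN0 (by simpa using hN0mem)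
      set a₀ : ↥A := ⟨(fun _ => Sum.inl 0, 1), show (1:ℝ≥0) ≤ 1 from le_rfl⟩ with ha₀
      refine ⟨{p : ↥A × ↥A | p.1 = a₀ ∧ (q, (p.2 : DiskT n)) ∈ K}, ?_, a₀, ?_⟩
      · -- this set is controlled in the subspace structure
        refine ⟨P, hP, Comp {((1 : ℝ≥0), q.2)} M₂,
          hc.coarse.comp_mem hsingle hM₂, ?_⟩
        rintro ⟨u, v⟩ ⟨⟨a, b⟩, ⟨ha, hb⟩, heq⟩
        obtain ⟨he1, he2⟩ := Prod.ext_iff.1 heq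
        subst ha
        obtain ⟨hb1, hb2⟩ := hKsub hb
        constructor
        · rw [← he1, ← he2]
          exact hPmem (b : DiskT n).1 hb1
        · rw [← he1, ← he2]
          exact ⟨q.2, rfl, hb2⟩
      · ext a
        simp [Set.mem_setOf_eq]
    · -- g maps controlled sets to controlled sets
      rintro M ⟨M₁, hM₁, M₂, hM₂, hMsub⟩
      show (fun p : ↥A × ↥A => ((p.1 : DiskT n), (p.2 : DiskT n))) ''
          ((fun p : DiskT n × DiskT n => (g p.1, g p.2)) '' M) ∈ diskC c n
      refine ⟨M₁, hM₁,
        {p : ℝ≥0 × ℝ≥0 | ∃ x y, (x, y) ∈ M₂ ∧ p = (1 + x, 1 + y)},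
        hc.translate_mem 1 hM₂, ?_⟩
      rw [Set.image_image]
      rintro ⟨u, v⟩ ⟨⟨p₁, p₂⟩, hp, heq⟩
      obtain ⟨he1, he2⟩ := Prod.ext_iff.1 heq
      obtain ⟨h1, h2⟩ := hMsub hp
      constructor
      · rw [← he1, ← he2]; exact h1
      · rw [← he1, ← he2]
        exact ⟨p₁.2, p₂.2, h2, by simp [hg, add_comm]⟩
    · -- preimages of bounded sets under g are bounded
      rintro B ⟨M', hM', a, rfl⟩
      obtain ⟨M₁, hM₁, M₂, hM₂, hMsub⟩ := hM'
      set a' : DiskT n := (a : DiskT n) with ha'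
      have hpre : g ⁻¹' {y : ↥A | (a, y) ∈ M'} ⊆
          {x | (a'.1, x) ∈ M₁} ×ˢ {t | (a'.2, t) ∈ Comp M₂ W} := by
        intro q hq
        have : ((a' , ((g q : ↥A) : DiskT n)) :
            DiskT n × DiskT n) ∈ (fun p : ↥A × ↥A =>
              ((p.1 : DiskT n), (p.2 : DiskT n))) '' M' := ⟨(a, g q), hq, rfl⟩
        obtain ⟨h1, h2⟩ := hMsub this
        exact ⟨h1, q.2 + 1, h2, hWmem q.2⟩
      have hbdd : IsBounded (diskC c n)
          ({x | (a'.1, x) ∈ M₁} ×ˢ {t | (a'.2, t) ∈ Comp M₂ W}) := by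
        refine ⟨{p : DiskT n × DiskT n | p.1 = a' ∧ (a'.1, p.2.1) ∈ M₁ ∧
            (a'.2, p.2.2) ∈ Comp M₂ W}, ?_, a', ?_⟩
        · refine ⟨M₁, hM₁, Comp M₂ W, hc.coarse.comp_mem hM₂ hW, ?_⟩
          rintro ⟨u, v⟩ ⟨rfl, h1, h2⟩
          exact ⟨h1, h2⟩
        · ext y
          simp [Set.mem_prod, Set.mem_setOf_eq]
      exact isBounded_mono diskC_subset_closed hbdd hpre
    · -- g ∘ ι is close to the identity
      show (fun p : ↥A × ↥A => ((p.1 : DiskT n), (p.2 : DiskT n))) ''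
          {p : ↥A × ↥A | ∃ s, p = ((g ∘ fun q : ↥A => (q : DiskT n)) s, id s)}
          ∈ diskC c n
      refine diskC_subset_closed hshiftD ?_
      rintro p ⟨pq, ⟨s, rfl⟩, rfl⟩
      exact ⟨rfl, hWmem (s : DiskT n).2⟩
    · -- ι ∘ g is close to the identity
      show {p : DiskT n × DiskT n |
          ∃ s, p = (((fun q : ↥A => (q : DiskT n)) ∘ g) s, id s)} ∈ diskC c n
      refine diskC_subset_closed hshiftD ?_
      rintro p ⟨s, rfl⟩
      exact ⟨rfl, hWmem s.2⟩
  exact ⟨main, _, main⟩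


end CoarsePaper
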